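/- Let (X_i) be an ε-ranking supermartingale with ε > 0 with respect to a stopping time T, with E[X_0] < ∞. Then for every t ∈ ℕ with t ≥ 1, P[T ≥ t] ≤ E[X_0]/(ε·t). -/

import Mathlib

open MeasureTheory Filter

/-- For an ε-RSM `X` (ε > 0) with respect to a stopping time `T`,
`P[T ≥ t] ≤ E[X 0] / (ε * t)` for every `t ≥ 1`. -/
theorem rsm_stopping_time_markov_bound
    {Ω : Type*} {m0 : MeasurableSpace Ω} {μ : Measure Ω} [IsProbabilityMeasure μ]
    (ℱ : Filtration ℕ m0) (X : ℕ → Ω → ℝ) (T : Ω → ℕ∞) (ε : ℝ) (hε : 0 < ε)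
    (hstop : ∀ i : ℕ, MeasurableSet[ℱ i] {ω | T ω ≤ (i : ℕ∞)})
    (hadapted : Adapted ℱ X)
    (hint : ∀ i, Integrable (X i) μ)
    (hnonneg : ∀ i ω, 0 ≤ X i ω)
    (hdec : ∀ i : ℕ, ∀ ω : Ω,
      (μ[X (i + 1) | ℱ i]) ω ≤ X i ω - ε * Set.indicator {ω | (i : ℕ∞) < T ω} (fun _ => 1) ω) :
    ∀ t : ℕ, 1 ≤ t →
      (μ {ω | (t : ℕ∞) ≤ T ω}).toReal ≤ (∫ ω, X 0 ω ∂μ) / (ε * t) := by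
  have hm : ∀ i : ℕ, MeasurableSet {ω | (i : ℕ∞) < T ω} := by
    intro i
    have := (ℱ.le i) _ (hstop i).compl
    convert this using 1
    ext ω; simp [not_le]
  have hindint : ∀ i : ℕ, Integrable
      (fun ω => ε * Set.indicator {ω | (i : ℕ∞) < T ω} (fun _ => (1:ℝ)) ω) μ := by
    intro i
    exact ((integrable_const (1:ℝ)).indicator (hm i)).const_mul ε
  have key : ∀ i : ℕ, ∫ ω, X (i+1) ω ∂μ ≤
      ∫ ω, X i ω ∂μ - ε * (μ {ω | (i : ℕ∞) < T ω}).toReal := by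
    intro i
    have h1 : ∫ ω, X (i+1) ω ∂μ = ∫ ω, (μ[X (i+1) | ℱ i]) ω ∂μ :=
      (integral_condExp (ℱ.le i)).symm
    have h2 : ∫ ω, (μ[X (i+1) | ℱ i]) ω ∂μ ≤
        ∫ ω, (X i ω - ε * Set.indicator {ω | (i : ℕ∞) < T ω} (fun _ => 1) ω) ∂μ := by
      apply integral_mono integrable_condExp ((hint i).sub (hindint i)) (hdec i)
    have h3 : ∫ ω, (X i ω - ε * Set.indicator {ω | (i : ℕ∞) < T ω} (fun _ => 1) ω) ∂μ
        = ∫ ω, X i ω ∂μ - ε * (μ {ω | (i : ℕ∞) < T ω}).toReal := by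
      rw [integral_sub (hint i) (hindint i), integral_const_mul,
        integral_indicator_const (1:ℝ) (hm i), smul_eq_mul, mul_one, measureReal_def]
    rw [h1, ← h3]; exact h2
  have tele : ∀ t : ℕ, ∫ ω, X t ω ∂μ +
      ε * ∑ i ∈ Finset.range t, (μ {ω | (i : ℕ∞) < T ω}).toReal ≤ ∫ ω, X 0 ω ∂μ := by
    intro t
    induction t with
    | zero => simp
    | succ n ih =>
      have := key n
      rw [Finset.sum_range_succ]
      linarith
  intro t ht
  have hsub : ∀ i ∈ Finset.range t, (μ {ω | (t : ℕ∞) ≤ T ω}).toReal ≤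
      (μ {ω | (i : ℕ∞) < T ω}).toReal := by
    intro i hi
    apply ENNReal.toReal_mono (measure_ne_top _ _)
    apply measure_mono
    intro ω hω
    have hlt : (i : ℕ∞) < (t : ℕ∞) := by exact_mod_cast Finset.mem_range.mp hi
    exact hlt.trans_le hω
  have hsum : (t : ℝ) * (μ {ω | (t : ℕ∞) ≤ T ω}).toReal ≤
      ∑ i ∈ Finset.range t, (μ {ω | (i : ℕ∞) < T ω}).toReal := by
    calc (t : ℝ) * (μ {ω | (t : ℕ∞) ≤ T ω}).toReal
        = ∑ _i ∈ Finset.range t, (μ {ω | (t : ℕ∞) ≤ T ω}).toReal := by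
          simp [Finset.sum_const, mul_comm]
      _ ≤ _ := Finset.sum_le_sum hsub
  have hXt : 0 ≤ ∫ ω, X t ω ∂μ := integral_nonneg (fun ω => hnonneg t ω)
  have htpos : (0:ℝ) < ε * t := by
    have : (0:ℝ) < (t:ℝ) := by exact_mod_cast ht
    positivity
  rw [le_div_iff₀ htpos]
  have := tele t
  nlinarith [this, hsum, hXt, hε.le]
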